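/- Let E and F be real Hilbert spaces and equip E × F with the ℓ² product inner product, so ‖(x,u)‖² = ‖x‖² + ‖u‖². Let β > 0 and let r : E × F → ℝ be nonnegative, convex, and β-smooth. Let f : E × F → E satisfy ‖f(x,u) − f(x',u)‖ ≤ σₓ·‖x − x'‖ for all x, x' ∈ E and u ∈ F, where σₓ ≥ 0. Let λ > 0 and let q, q' ≥ 0 satisfy σₓ²·q' + (1 + 1/λ)·(β/2) ≤ q. Suppose real numbers R, R† and points x, x† ∈ E, u† ∈ F satisfy the invariant R + q·‖x − x†‖² ≤ (1+λ)·R†. Then R + r(x, u†) + q'·‖f(x, u†) − f(x†, u†)‖² ≤ (1+λ)·(R† + r(x†, u†)). (This is the induction step of Proposition 4.2: the prior action u† remains feasible for the reservation-augmented safe set at the next round.) -/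

import Mathlib

open intervalIntegral Real

section aux
variable {H : Type*} [NormedAddCommGroup H] [InnerProductSpace ℝ H] [CompleteSpace H]

/-- Descent lemma. -/
lemma descent (r : H → ℝ) (g : H → H) (β : ℝ) (hβ : 0 < β)
    (hgrad : ∀ z, HasGradientAt r (g z) z)
    (hglip : ∀ z w, ‖g z - g w‖ ≤ β * ‖z - w‖) (z w : H) :
    r z ≤ r w + inner ℝ (g w) (z - w) + β / 2 * ‖z - w‖ ^ 2 := by
  set d := z - w with hd
  have hgc : Continuous g := by
    refine (LipschitzWith.of_dist_le_mul (K := β.toNNReal) fun a b => ?_).continuous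
    simpa [dist_eq_norm, Real.coe_toNNReal _ hβ.le] using hglip a b
  have hderiv : ∀ t : ℝ, HasDerivAt (fun s : ℝ => r (w + s • d))
      (inner ℝ (g (w + t • d)) d) t := by
    intro t
    have h1 : HasDerivAt (fun s : ℝ => w + s • d) d t := by
      simpa using ((hasDerivAt_id t).smul_const d).const_add w
    have h2 := (hgrad (w + t • d)).hasFDerivAt.comp_hasDerivAt t h1
    simp [InnerProductSpace.toDual] at h2
    exact h2
  have hcont : Continuous fun t : ℝ => (inner ℝ (g (w + t • d)) d : ℝ) := by
    exact (continuous_inner.comp ((hgc.comp (by continuity)).prodMk continuous_const))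
  have key : r (w + (1:ℝ) • d) - r (w + (0:ℝ) • d)
      = ∫ t in (0:ℝ)..1, inner ℝ (g (w + t • d)) d := by
    refine (intervalIntegral.integral_eq_sub_of_hasDerivAt (fun t _ => hderiv t) ?_).symm
    exact (hcont.intervalIntegrable 0 1)
  have hb : ∀ t ∈ Set.Icc (0:ℝ) 1,
      (inner ℝ (g (w + t • d)) d : ℝ) ≤ inner ℝ (g w) d + β * t * ‖d‖ ^ 2 := by
    intro t ht
    have h1 : (inner ℝ (g (w + t • d)) d : ℝ) - inner ℝ (g w) d
        = inner ℝ (g (w + t • d) - g w) d := by rw [inner_sub_left]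
    have h2 : (inner ℝ (g (w + t • d) - g w) d : ℝ) ≤ ‖g (w + t • d) - g w‖ * ‖d‖ :=
      real_inner_le_norm _ _
    have h3 : ‖g (w + t • d) - g w‖ ≤ β * (t * ‖d‖) := by
      have := hglip (w + t • d) w
      simpa [norm_smul, abs_of_nonneg ht.1] using this
    nlinarith [norm_nonneg d, norm_nonneg (g (w + t • d) - g w)]
  have hI : (∫ t in (0:ℝ)..1, inner ℝ (g (w + t • d)) d : ℝ)
      ≤ ∫ t in (0:ℝ)..1, (inner ℝ (g w) d + β * t * ‖d‖ ^ 2) := by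
    refine intervalIntegral.integral_mono_on zero_le_one (hcont.intervalIntegrable 0 1)
      ((by continuity : Continuous fun t : ℝ => (inner ℝ (g w) d : ℝ) + β * t * ‖d‖ ^ 2).intervalIntegrable 0 1) hb
  have hRHS : (∫ t in (0:ℝ)..1, (inner ℝ (g w) d + β * t * ‖d‖ ^ 2) : ℝ)
      = inner ℝ (g w) d + β / 2 * ‖d‖ ^ 2 := by
    rw [intervalIntegral.integral_add (intervalIntegrable_const)
      ((by fun_prop : Continuous fun t : ℝ => β * t * ‖d‖ ^ 2).intervalIntegrable 0 1)]
    simp [mul_comm, mul_assoc]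
    ring
  have : r z - r w ≤ inner ℝ (g w) d + β / 2 * ‖d‖ ^ 2 := by
    have hz : w + (1:ℝ) • d = z := by simp [hd]
    have hw : w + (0:ℝ) • d = w := by simp
    rw [hz, hw] at key
    rw [key]; rw [hRHS] at hI; exact hI
  linarith

lemma grad_sq_le (r : H → ℝ) (g : H → H) (β : ℝ) (hβ : 0 < β)
    (hr0 : ∀ z, 0 ≤ r z)
    (hgrad : ∀ z, HasGradientAt r (g z) z)
    (hglip : ∀ z w, ‖g z - g w‖ ≤ β * ‖z - w‖) (w : H) :
    ‖g w‖ ^ 2 ≤ 2 * β * r w := by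
  have h := descent r g β hβ hgrad hglip (w - β⁻¹ • g w) w
  have h1 : (w - β⁻¹ • g w) - w = -(β⁻¹ • g w) := by abel
  rw [h1] at h
  have h2 : (inner ℝ (g w) (-(β⁻¹ • g w)) : ℝ) = -(β⁻¹ * ‖g w‖ ^ 2) := by
    rw [inner_neg_right, real_inner_smul_right, real_inner_self_eq_norm_sq]
  have h3 : ‖-(β⁻¹ • g w)‖ ^ 2 = β⁻¹ * β⁻¹ * ‖g w‖ ^ 2 := by
    rw [norm_neg, norm_smul, mul_pow, Real.norm_eq_abs, sq_abs]
    ring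
  have h0 := hr0 (w - β⁻¹ • g w)
  rw [h2, h3] at h
  have hβ' : β * β⁻¹ = 1 := mul_inv_cancel₀ hβ.ne'
  have h4 : β / 2 * (β⁻¹ * β⁻¹ * ‖g w‖ ^ 2) = (β * β⁻¹) * (β⁻¹ * ‖g w‖ ^ 2) / 2 := by ring
  rw [h4, hβ', one_mul] at h
  have h5 : β⁻¹ * ‖g w‖ ^ 2 ≤ 2 * r w := by linarith
  have h6 : β * (β⁻¹ * ‖g w‖ ^ 2) ≤ β * (2 * r w) :=
    mul_le_mul_of_nonneg_left h5 hβ.le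
  calc ‖g w‖ ^ 2 = (β * β⁻¹) * ‖g w‖ ^ 2 := by rw [hβ']; ring
    _ = β * (β⁻¹ * ‖g w‖ ^ 2) := by ring
    _ ≤ β * (2 * r w) := h6
    _ = 2 * β * r w := by ring

end aux

theorem stmt1 {E F : Type*}
    [NormedAddCommGroup E] [InnerProductSpace ℝ E] [CompleteSpace E]
    [NormedAddCommGroup F] [InnerProductSpace ℝ F] [CompleteSpace F]
    (r : WithLp 2 (E × F) → ℝ) (g : WithLp 2 (E × F) → WithLp 2 (E × F))
    (f : E → F → E) (β σx lam q q' R Rdag : ℝ) (x xdag : E) (udag : F)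
    (hβ : 0 < β)
    (hr0 : ∀ z, 0 ≤ r z)
    (hconv : ConvexOn ℝ Set.univ r)
    (hgrad : ∀ z, HasGradientAt r (g z) z)
    (hglip : ∀ z w, ‖g z - g w‖ ≤ β * ‖z - w‖)
    (hσx : 0 ≤ σx)
    (hf : ∀ (a a' : E) (b : F), ‖f a b - f a' b‖ ≤ σx * ‖a - a'‖)
    (hlam : 0 < lam) (hq : 0 ≤ q) (hq' : 0 ≤ q')
    (hqq : σx ^ 2 * q' + (1 + 1 / lam) * (β / 2) ≤ q)
    (hinv : R + q * ‖x - xdag‖ ^ 2 ≤ (1 + lam) * Rdag) :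
    R + r ((WithLp.equiv 2 (E × F)).symm (x, udag))
        + q' * ‖f x udag - f xdag udag‖ ^ 2
      ≤ (1 + lam) * (Rdag + r ((WithLp.equiv 2 (E × F)).symm (xdag, udag))) := by
  set z := (WithLp.equiv 2 (E × F)).symm (x, udag) with hz
  set w := (WithLp.equiv 2 (E × F)).symm (xdag, udag) with hw
  have hsub : z - w = (WithLp.equiv 2 (E × F)).symm (x - xdag, 0) := by
    apply (WithLp.equiv 2 (E × F)).injective
    simp [hz, hw, Prod.sub_def]
  set D := ‖x - xdag‖ ^ 2 with hD
  have hnorm : ‖z - w‖ ^ 2 = D := by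
    rw [hsub, WithLp.prod_norm_sq_eq_of_L2, hD]
    simp
  have h1 := descent r g β hβ hgrad hglip z w
  rw [hnorm] at h1
  have h2 := grad_sq_le r g β hβ hr0 hgrad hglip w
  have h3 : (inner ℝ (g w) (z - w) : ℝ) ≤ ‖g w‖ * ‖z - w‖ := real_inner_le_norm _ _
  have hA : 0 ≤ r w := hr0 w
  have hD0 : 0 ≤ D := by rw [hD]; positivity
  have hdn : 0 ≤ ‖z - w‖ := norm_nonneg _
  have step2 : ‖g w‖ * ‖z - w‖ ≤ lam * r w + β / (2 * lam) * D := by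
    have hkey : 2 * lam * β * (‖g w‖ * ‖z - w‖) ≤ 2 * lam ^ 2 * β * r w + β ^ 2 * D := by
      nlinarith [sq_nonneg (lam * ‖g w‖ - β * ‖z - w‖), hnorm,
        mul_le_mul_of_nonneg_left h2 (sq_nonneg lam)]
    have hpos : (0:ℝ) < 2 * lam * β := by positivity
    have h5 : 2 * lam * β * (lam * r w + β / (2 * lam) * D)
        = 2 * lam ^ 2 * β * r w + β ^ 2 * D := by
      field_simp
    refine le_of_mul_le_mul_left ?_ hpos
    rw [h5]
    exact hkey
  have step1 : r z ≤ (1 + lam) * r w + (1 + 1 / lam) * (β / 2) * D := by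
    have hexp : lam * r w + β / (2 * lam) * D + β / 2 * D
        = lam * r w + (1 + 1 / lam) * (β / 2) * D := by
      field_simp
      ring
    linarith [h1, h3, step2]
  have step3 : q' * ‖f x udag - f xdag udag‖ ^ 2 ≤ q' * (σx ^ 2 * D) := by
    have hb := hf x xdag udag
    have h6 : ‖f x udag - f xdag udag‖ ^ 2 ≤ (σx * ‖x - xdag‖) ^ 2 :=
      pow_le_pow_left₀ (norm_nonneg _) hb 2
    calc q' * ‖f x udag - f xdag udag‖ ^ 2 ≤ q' * (σx * ‖x - xdag‖) ^ 2 :=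
          mul_le_mul_of_nonneg_left h6 hq'
      _ = q' * (σx ^ 2 * D) := by rw [hD]; ring
  have hqD : (σx ^ 2 * q' + (1 + 1 / lam) * (β / 2)) * D ≤ q * D :=
    mul_le_mul_of_nonneg_right hqq hD0
  nlinarith [step1, step3, hqD, hinv, hA, hlam]
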